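/- Let Q be the n×n tridiagonal integer matrix with diagonal entries -v_1,...,-v_n where each v_i ≥ 2, and off-diagonal entries Q_{i,i+1} = Q_{i+1,i} = 1. Then Q is invertible and every entry of Q^{-1} is strictly negative. -/

import Mathlib

open Matrix

private lemma key : ∀ (n : ℕ) (v : Fin n → ℤ), (∀ i, 2 ≤ v i) →
    ∀ (Q : Matrix (Fin n) (Fin n) ℚ), (∀ i j, Q i j =
      if i = j then -(v i : ℚ)
      else if (i : ℕ) + 1 = (j : ℕ) ∨ (j : ℕ) + 1 = (i : ℕ) then 1 else 0) →
    ∃ B : Matrix (Fin n) (Fin n) ℚ, Q * B = 1 ∧ (∀ i j, B i j < 0) ∧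
      (∀ i j : Fin n, (i : ℕ) + 1 = n → (j : ℕ) + 1 = n → -1 < B i j) := by
  intro n
  induction n with
  | zero =>
    intro v hv Q hQ
    exact ⟨0, Subsingleton.elim _ _, fun i => i.elim0, fun i => i.elim0⟩
  | succ n ih =>
    intro v hv Q hQ
    -- symmetric entries
    have hQs : ∀ i j, Q i j = Q j i := by
      intro i j
      rw [hQ, hQ]
      rcases eq_or_ne i j with rfl | h
      · simp
      · rw [if_neg h, if_neg (Ne.symm h)]
        exact if_congr or_comm rfl rfl
    -- top-left block
    set A : Matrix (Fin n) (Fin n) ℚ := fun i j => Q i.castSucc j.castSucc with hAdef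
    have hQ' : ∀ i j, A i j =
        if i = j then -((v ∘ Fin.castSucc) i : ℚ)
        else if (i : ℕ) + 1 = (j : ℕ) ∨ (j : ℕ) + 1 = (i : ℕ) then 1 else 0 := by
      intro i j
      rw [hAdef]
      simp only [hQ, Fin.castSucc_inj, Fin.coe_castSucc, Function.comp_apply]
    obtain ⟨B, hAB, hBneg, hBl⟩ := ih (v ∘ Fin.castSucc) (fun i => hv _) A hQ'
    have h1 : ∀ i j, ∑ k, A i k * B k j = if i = j then (1:ℚ) else 0 := by
      intro i j
      have := congrFun (congrFun hAB i) j
      rwa [Matrix.mul_apply, Matrix.one_apply] at this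
    -- symmetry of B
    have hAs : Aᵀ = A := by
      ext i j
      rw [Matrix.transpose_apply, hQ', hQ']
      rcases eq_or_ne i j with rfl | h
      · simp
      · rw [if_neg h, if_neg (Ne.symm h)]
        exact (if_congr or_comm rfl rfl).symm
    have hBsymM : Bᵀ = B := by
      calc Bᵀ = Bᵀ * (A * B) := by rw [hAB, Matrix.mul_one]
        _ = (Bᵀ * Aᵀ) * B := by rw [hAs, Matrix.mul_assoc]
        _ = (A * B)ᵀ * B := by rw [Matrix.transpose_mul]
        _ = B := by rw [hAB, Matrix.transpose_one, Matrix.one_mul]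
    have hBsym : ∀ i j, B i j = B j i := by
      intro i j
      have := congrFun (congrFun hBsymM j) i
      rwa [Matrix.transpose_apply] at this
    -- last column of Q (restricted)
    set c : Fin n → ℚ := fun i => Q i.castSucc (Fin.last n) with hcdef
    have hc : ∀ i : Fin n, c i = if (i : ℕ) + 1 = n then 1 else 0 := by
      intro i
      rw [hcdef]
      simp only [hQ]
      rw [if_neg (Fin.castSucc_lt_last i).ne]
      have hor : ((i.castSucc : ℕ) + 1 = (Fin.last n : ℕ) ∨
          (Fin.last n : ℕ) + 1 = (i.castSucc : ℕ)) ↔ (i : ℕ) + 1 = n := by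
        simp only [Fin.coe_castSucc, Fin.val_last]
        constructor
        · rintro (h | h)
          · exact h
          · exact absurd h (by have := i.isLt; omega)
        · exact Or.inl
      rw [if_congr hor rfl rfl]
    set w : Fin n → ℚ := fun i => ∑ j, B i j * c j with hwdef
    set s : ℚ := -(v (Fin.last n) : ℚ) - ∑ i, c i * w i with hsdef
    have hd : Q (Fin.last n) (Fin.last n) = -(v (Fin.last n) : ℚ) := by
      rw [hQ]; simp
    have hd2 : -(v (Fin.last n) : ℚ) ≤ -2 := by
      have := hv (Fin.last n)
      have : (2:ℚ) ≤ (v (Fin.last n) : ℚ) := by exact_mod_cast this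
      linarith
    -- key bounds on w and the sum
    have hkey : (∀ i, w i < 0) ∧ (-1 < ∑ i, c i * w i) ∧ (∑ i, c i * w i ≤ 0) := by
      obtain hn0 | ⟨m, rfl⟩ : n = 0 ∨ ∃ m, n = m + 1 := by
        rcases Nat.eq_zero_or_eq_succ_pred n with h | h
        exacts [Or.inl h, Or.inr ⟨n - 1, h⟩]
      · subst hn0
        refine ⟨fun i => i.elim0, ?_, ?_⟩ <;> simp
      · have hc' : ∀ i : Fin (m+1), c i = if i = Fin.last m then 1 else 0 := by
          intro i
          rw [hc]
          have : ((i : ℕ) + 1 = m + 1) ↔ i = Fin.last m := by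
            rw [Fin.ext_iff, Fin.val_last]; omega
          rw [if_congr this rfl rfl]
        have hw' : ∀ i, w i = B i (Fin.last m) := by
          intro i
          rw [hwdef]
          simp [hc', mul_ite, mul_one, mul_zero, Finset.sum_ite_eq']
        have hsum : ∑ i, c i * w i = B (Fin.last m) (Fin.last m) := by
          simp [hc', hw', ite_mul, one_mul, zero_mul, Finset.sum_ite_eq']
        refine ⟨fun i => by rw [hw']; exact hBneg _ _, ?_, ?_⟩
        · rw [hsum]
          exact hBl _ _ (by simp) (by simp)
        · rw [hsum]
          exact le_of_lt (hBneg _ _)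
    obtain ⟨hw, hSgt, hSle⟩ := hkey
    have hs1 : s < -1 := by rw [hsdef]; linarith
    have hSig : ∑ i, c i * w i = -(v (Fin.last n) : ℚ) - s := by rw [hsdef]; ring
    have hsneg : s < 0 := by linarith
    have hs0 : s ≠ 0 := ne_of_lt hsneg
    -- A * w = c
    have hAw : ∀ i, ∑ k, A i k * w k = c i := by
      intro i
      calc ∑ k, A i k * w k = ∑ k, ∑ j, A i k * B k j * c j := by
            simp only [hwdef, Finset.mul_sum, mul_assoc]
        _ = ∑ j, (∑ k, A i k * B k j) * c j := by
            rw [Finset.sum_comm]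
            simp only [Finset.sum_mul]
        _ = ∑ j, (if i = j then (1:ℚ) else 0) * c j := by simp_rw [h1]
        _ = c i := by simp
    -- c * B = w
    have hcB : ∀ j, ∑ k, c k * B k j = w j := by
      intro j
      rw [hwdef]
      refine Finset.sum_congr rfl fun k _ => ?_
      rw [hBsym j k, mul_comm]
    -- the inverse
    set B' : Matrix (Fin (n+1)) (Fin (n+1)) ℚ := fun i =>
      Fin.lastCases
        (fun j => Fin.lastCases (1/s) (fun j' => -w j' / s) j)
        (fun i' j => Fin.lastCases (-w i' / s) (fun j' => B i' j' + w i' * w j' / s) j)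
        i with hB'def
    have hB'cc : ∀ i j : Fin n, B' i.castSucc j.castSucc = B i j + w i * w j / s := by
      intro i j; rw [hB'def]; simp
    have hB'cl : ∀ i : Fin n, B' i.castSucc (Fin.last n) = -w i / s := by
      intro i; rw [hB'def]; simp
    have hB'lc : ∀ j : Fin n, B' (Fin.last n) j.castSucc = -w j / s := by
      intro j; rw [hB'def]; simp
    have hB'll : B' (Fin.last n) (Fin.last n) = 1/s := by
      rw [hB'def]; simp
    have hQc' : ∀ k : Fin n, Q (Fin.last n) k.castSucc = c k := by
      intro k; rw [hQs]
    refine ⟨B', ?_, ?_, ?_⟩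
    · ext i j
      rw [Matrix.mul_apply, Fin.sum_univ_castSucc]
      have h3 : ∀ (i k : Fin n), Q i.castSucc k.castSucc = A i k := fun _ _ => rfl
      have h4 : ∀ i : Fin n, Q i.castSucc (Fin.last n) = c i := fun _ => rfl
      induction i using Fin.lastCases with
      | last =>
        induction j using Fin.lastCases with
        | last =>
          simp only [hQc', hB'cl, hd, hB'll]
          rw [Matrix.one_apply_eq]
          have he : ∑ k, c k * (-w k / s) = (∑ k, c k * w k) * (-1 / s) := by
            rw [Finset.sum_mul]
            exact Finset.sum_congr rfl fun k _ => by ring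
          rw [he, hSig]
          field_simp
          ring
        | cast j' =>
          simp only [hQc', hB'cc, hd, hB'lc]
          rw [Matrix.one_apply_ne (Fin.castSucc_lt_last j').ne']
          have he : ∑ k, c k * (B k j' + w k * w j' / s)
              = ∑ k, c k * B k j' + (∑ k, c k * w k) * (w j' / s) := by
            rw [Finset.sum_mul, ← Finset.sum_add_distrib]
            exact Finset.sum_congr rfl fun k _ => by ring
          rw [he, hcB, hSig]
          field_simp
          ring
      | cast i' =>
        induction j using Fin.lastCases with
        | last =>
          simp only [h3, h4, hB'cl, hB'll]
          rw [Matrix.one_apply_ne (Fin.castSucc_lt_last i').ne]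
          have he : ∑ k, A i' k * (-w k / s) = (∑ k, A i' k * w k) * (-1 / s) := by
            rw [Finset.sum_mul]
            exact Finset.sum_congr rfl fun k _ => by ring
          rw [he, hAw]
          field_simp
          ring
        | cast j' =>
          simp only [h3, h4, hB'cc, hB'lc]
          have he : ∑ k, A i' k * (B k j' + w k * w j' / s)
              = ∑ k, A i' k * B k j' + (∑ k, A i' k * w k) * (w j' / s) := by
            rw [Finset.sum_mul, ← Finset.sum_add_distrib]
            exact Finset.sum_congr rfl fun k _ => by ring
          rw [he, hAw, h1]
          rcases eq_or_ne i' j' with rfl | h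
          · rw [if_pos rfl, Matrix.one_apply_eq]
            ring
          · rw [if_neg h, Matrix.one_apply_ne (by rwa [Ne, Fin.castSucc_inj])]
            ring
    · intro i j
      induction i using Fin.lastCases with
      | last =>
        induction j using Fin.lastCases with
        | last => rw [hB'll]; exact div_neg_of_pos_of_neg one_pos hsneg
        | cast j' => rw [hB'lc]; exact div_neg_of_pos_of_neg (by linarith [hw j']) hsneg
      | cast i' =>
        induction j using Fin.lastCases with
        | last => rw [hB'cl]; exact div_neg_of_pos_of_neg (by linarith [hw i']) hsneg
        | cast j' =>
          rw [hB'cc]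
          have hp : 0 < w i' * w j' := mul_pos_of_neg_of_neg (hw i') (hw j')
          have := div_neg_of_pos_of_neg hp hsneg
          linarith [hBneg i' j']
    · intro i j hi hj
      have hi' : i = Fin.last n := by apply Fin.ext; rw [Fin.val_last]; omega
      have hj' : j = Fin.last n := by apply Fin.ext; rw [Fin.val_last]; omega
      subst hi'; subst hj'
      rw [hB'll]
      rw [lt_div_iff_of_neg hsneg]
      linarith

theorem stmt1 (n : ℕ) (v : Fin n → ℤ) (hv : ∀ i, 2 ≤ v i)
    (Q : Matrix (Fin n) (Fin n) ℚ)
    (hQ : ∀ i j, Q i j =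
      if i = j then -(v i : ℚ)
      else if (i : ℕ) + 1 = (j : ℕ) ∨ (j : ℕ) + 1 = (i : ℕ) then 1 else 0) :
    IsUnit Q.det ∧ ∀ i j, Q⁻¹ i j < 0 := by
  obtain ⟨B, hQB, hBneg, -⟩ := key n v hv Q hQ
  refine ⟨Matrix.isUnit_det_of_right_inverse hQB, fun i j => ?_⟩
  rw [Matrix.inv_eq_right_inv hQB]
  exact hBneg i j
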